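/- Let K be a field of characteristic zero or characteristic p with m ≤ p-1, m ≥ 5. No nontrivial solution (x₁,...,x_m) of the system x₁^k + ... + x_m^k = 0 (1 ≤ k ≤ m-2) has four coordinates with pairwise distinct indices i₁,i₂,i₃,i₄ such that x_{i₁} = x_{i₂} and x_{i₃} = x_{i₄}. -/

import Mathlib

open Polynomial Finset


/-- No nontrivial solution of the power-sum system of degrees 1..m-2 has four
coordinates with pairwise distinct indices i₁,i₂,i₃,i₄ such that
x_{i₁} = x_{i₂} and x_{i₃} = x_{i₄}. -/
theorem stmt3 {K : Type*} [Field K] (p m : ℕ) (hm : 5 ≤ m)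
    (hchar : CharP K 0 ∨ (p.Prime ∧ 0 < p ∧ CharP K p ∧ m ≤ p - 1))
    (x : Fin m → K) (hx : x ≠ 0)
    (hsol : ∀ k : ℕ, 1 ≤ k → k ≤ m - 2 → ∑ i, x i ^ k = 0) :
    ¬ ∃ i₁ i₂ i₃ i₄ : Fin m, i₁ ≠ i₂ ∧ i₁ ≠ i₃ ∧ i₁ ≠ i₄ ∧ i₂ ≠ i₃ ∧ i₂ ≠ i₄ ∧
      i₃ ≠ i₄ ∧ x i₁ = x i₂ ∧ x i₃ = x i₄ := by
  classical
  rintro ⟨i₁, i₂, i₃, i₄, h12, h13, h14, h23, h24, h34, hx12, hx34⟩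
  classical
  -- natural casts are nonzero
  have hcast : ∀ k : ℕ, 1 ≤ k → k ≤ m → (k : K) ≠ 0 := by
    intro k hk1 hkm h
    rcases hchar with h0 | ⟨hp, hppos, hcp, hmp⟩
    · rw [CharP.cast_eq_zero_iff K 0 k] at h
      omega
    · rw [CharP.cast_eq_zero_iff K p k] at h
      have := Nat.le_of_dvd (by omega) h
      omega
  -- elementary symmetric functions vanish
  have hesymm : ∀ k : ℕ, 1 ≤ k → k ≤ m - 2 → (Finset.univ.val.map x).esymm k = 0 := by
    intro k hk1 hk2
    have hnewton := congrArg (MvPolynomial.aeval x) (MvPolynomial.mul_esymm_eq_sum (Fin m) K k)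
    simp only [map_mul, map_sum, map_pow, map_neg, map_one, map_natCast,
      MvPolynomial.aeval_esymm_eq_multiset_esymm, MvPolynomial.psum, MvPolynomial.aeval_X]
      at hnewton
    have hzero : ∀ a ∈ (Finset.HasAntidiagonal.antidiagonal k).filter (fun a => a.1 < k),
        (-1:K)^a.1 * (Finset.univ.val.map x).esymm a.1 * (∑ i, x i ^ a.2) = 0 := by
      intro a ha
      rw [Finset.mem_filter, Finset.HasAntidiagonal.mem_antidiagonal] at ha
      rw [hsol a.2 (by omega) (by omega), mul_zero]
    rw [Finset.sum_eq_zero hzero, mul_zero] at hnewton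
    rcases mul_eq_zero.mp hnewton with h | h
    · exact absurd h (hcast k hk1 (by omega))
    · exact h
  set f : K[X] := ∏ i : Fin m, (X - C (x i)) with hf
  have hf0 : f ≠ 0 := by
    rw [hf, Finset.prod_ne_zero_iff]
    exact fun i _ => X_sub_C_ne_zero (x i)
  have hmonic : f.Monic := monic_prod_of_monic _ _ fun i _ => monic_X_sub_C (x i)
  have hdeg : f.natDegree = m := by
    rw [hf, natDegree_prod _ _ fun i _ => X_sub_C_ne_zero (x i)]
    simp
  have hmult : (Multiset.card (Finset.univ.val.map x)) = m := by simp
  have hfm : f = ((Finset.univ.val.map x).map fun t => X - C t).prod := by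
    rw [hf, Multiset.map_map, Finset.prod_eq_multiset_prod]
    rfl
  have hcoeff : ∀ j : ℕ, 2 ≤ j → j ≤ m - 1 → f.coeff j = 0 := by
    intro j hj2 hj1
    rw [hfm, Multiset.prod_X_sub_C_coeff _ (by rw [hmult]; omega), hmult,
      hesymm (m - j) (by omega) (by omega), mul_zero]
  set c : K := f.coeff 1 with hc
  set d : K := f.coeff 0 with hd
  have hfeq : f = X ^ m + C c * X + C d := by
    ext n
    rw [coeff_add, coeff_add, coeff_X_pow, coeff_C_mul, coeff_X, coeff_C]
    by_cases h0 : n = 0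
    · rw [h0, if_neg (show ¬(0 = m) by omega), if_neg (show ¬(1 = 0) by omega), if_pos rfl]
      show f.coeff 0 = 0 + c * 0 + d
      rw [hd]; ring
    by_cases h1 : n = 1
    · rw [h1, if_neg (show ¬(1 = m) by omega), if_pos rfl, if_neg (show ¬(1 = 0) by omega)]
      show f.coeff 1 = 0 + c * 1 + 0
      rw [hc]; ring
    by_cases hnm : n = m
    · rw [if_pos hnm, if_neg (fun h => h1 h.symm), if_neg h0]
      have hcm : f.coeff n = 1 := by
        rw [hnm, ← hdeg]; exact hmonic.coeff_natDegree
      rw [hcm]; ring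
    rw [if_neg hnm, if_neg (fun h => h1 h.symm), if_neg h0]
    by_cases hlt : n < m
    · rw [hcoeff n (by omega) (by omega)]; ring
    · rw [coeff_eq_zero_of_natDegree_lt (by omega : f.natDegree < n)]; ring
  -- explicit derivatives
  have hder : derivative f = C (m : K) * X ^ (m - 1) + C c := by
    rw [hfeq]
    simp [derivative_X_pow]
  have hder2 : derivative (derivative f) = C (m : K) * (C ((m - 1 : ℕ) : K) * X ^ (m - 2)) := by
    rw [hder]
    simp [derivative_X_pow, mul_assoc, Nat.sub_sub]
  set u : K := x i₁ with hu
  set v : K := x i₃ with hv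
  -- every x i is a root of f
  have hroot : ∀ i : Fin m, f.eval (x i) = 0 := by
    intro i
    rw [hf, eval_prod]
    exact Finset.prod_eq_zero (mem_univ i) (by simp)
  -- double root facts
  have hdvd2 : ∀ i j : Fin m, i ≠ j → x i = x j → (X - C (x i)) ^ 2 ∣ f := by
    intro i j hij hxij
    have h := Finset.prod_dvd_prod_of_subset ({i, j} : Finset (Fin m)) Finset.univ
      (fun i => X - C (x i)) (Finset.subset_univ _)
    rwa [Finset.prod_pair hij, ← hxij, ← sq] at h
  have hmult2 : ∀ i j : Fin m, i ≠ j → x i = x j → 2 ≤ f.rootMultiplicity (x i) := by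
    intro i j hij hxij
    exact (le_rootMultiplicity_iff hf0).mpr (hdvd2 i j hij hxij)
  have hderiv_root : ∀ i j : Fin m, i ≠ j → x i = x j →
      (m : K) * (x i) ^ (m - 1) + c = 0 := by
    intro i j hij hxij
    have h := isRoot_iterate_derivative_of_lt_rootMultiplicity
      (p := f) (t := x i) (n := 1) (by have := hmult2 i j hij hxij; omega)
    rw [Function.iterate_one, hder] at h
    simpa using h
  have hdu : (m : K) * u ^ (m - 1) + c = 0 := hderiv_root i₁ i₂ h12 hx12
  have hdv : (m : K) * v ^ (m - 1) + c = 0 := hderiv_root i₃ i₄ h34 hx34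
  have hfu : u ^ m + c * u + d = 0 := by
    have := hroot i₁
    rw [hfeq] at this
    simpa using this
  have hmK : (m : K) ≠ 0 := hcast m (by omega) le_rfl
  have hm1K : ((m - 1 : ℕ) : K) ≠ 0 := hcast (m - 1) (by omega) (by omega)
  -- show c = 0
  have hc0 : c = 0 := by
    by_contra hcne
    -- c ≠ 0 : then u = v
    have key : ∀ w : K, (m : K) * w ^ (m - 1) + c = 0 → w ^ m + c * w + d = 0 →
        c * ((m : K) - 1) * w = -(m : K) * d := by
      intro w h1 h2
      have hpow : w ^ m = w ^ (m - 1) * w := by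
        rw [← pow_succ]
        congr 1
        omega
      linear_combination (m : K) * h2 - w * h1 - (m : K) * hpow
    have hfv : v ^ m + c * v + d = 0 := by
      have := hroot i₃
      rw [hfeq] at this
      simpa using this
    have hku := key u hdu hfu
    have hkv := key v hdv hfv
    have hcm1 : c * ((m : K) - 1) ≠ 0 := by
      apply mul_ne_zero hcne
      have : ((m - 1 : ℕ) : K) = (m : K) - 1 := by
        push_cast [Nat.cast_sub (by omega : 1 ≤ m)]
        ring
      rw [← this]
      exact hm1K
    have huv : u = v := by
      have := hku.trans hkv.symm
      exact mul_left_cancel₀ hcm1 this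
    -- fourfold root at u
    have hdvd4 : (X - C u) ^ 4 ∣ f := by
      have hsub : ({i₁, i₂, i₃, i₄} : Finset (Fin m)) ⊆ Finset.univ := Finset.subset_univ _
      have h := Finset.prod_dvd_prod_of_subset ({i₁, i₂, i₃, i₄} : Finset (Fin m)) Finset.univ
        (fun i => X - C (x i)) hsub
      have hprod : ∏ i ∈ ({i₁, i₂, i₃, i₄} : Finset (Fin m)), (X - C (x i))
          = (X - C u) ^ 4 := by
        rw [Finset.prod_insert (by simp [h12, h13, h14]),
          Finset.prod_insert (by simp [h23, h24]),
          Finset.prod_insert (by simp [h34]), Finset.prod_singleton,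
          ← hx12, ← hu, ← hx34, ← hv, ← huv]
        ring
      rwa [hprod] at h
    have hmult4 : 4 ≤ f.rootMultiplicity u := (le_rootMultiplicity_iff hf0).mpr hdvd4
    have h2 := isRoot_iterate_derivative_of_lt_rootMultiplicity
      (p := f) (t := u) (n := 2) (by omega)
    have : derivative^[2] f = derivative (derivative f) := by
      rw [Function.iterate_succ, Function.iterate_one]
      rfl
    rw [this, hder2] at h2
    simp only [IsRoot, eval_mul, eval_C, eval_pow, eval_X] at h2
    have hu0 : u = 0 := by
      have := mul_eq_zero.mp h2
      rcases this with h | h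
      · exact absurd h hmK
      rcases mul_eq_zero.mp h with h | h
      · exact absurd h hm1K
      · exact pow_eq_zero_iff (by omega : m - 2 ≠ 0) |>.mp h
    rw [hu0, zero_pow (by omega : m - 1 ≠ 0), mul_zero, zero_add] at hdu
    exact hcne hdu
  -- now c = 0 forces u = 0 and d = 0
  have hu0 : u = 0 := by
    rw [hc0, add_zero] at hdu
    rcases mul_eq_zero.mp hdu with h | h
    · exact absurd h hmK
    · exact pow_eq_zero_iff (by omega : m - 1 ≠ 0) |>.mp h
  have hd0 : d = 0 := by
    rw [hu0, hc0] at hfu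
    simpa [zero_pow (show m ≠ 0 by omega)] using hfu
  -- hence f = X ^ m, so every x i = 0
  have hxall : ∀ i, x i = 0 := by
    intro i
    have := hroot i
    rw [hfeq, hc0, hd0] at this
    simp only [map_zero, zero_mul, add_zero, eval_pow, eval_X, eval_add] at this
    exact pow_eq_zero_iff (by omega : m ≠ 0) |>.mp (by simpa using this)
  exact hx (funext hxall)
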